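/- arXiv:1407.2976 — 5 statements merged into one kernel-verified Lean document; each statement's English description precedes it below -/
import Mathlib

section
/- The sequence s_n = Σ_{q=1}^{n} 2^q / C(2n,q) satisfies the recursion 9(2n+1)·s_{n+1} − 4(2n+3)·s_n = (10n+9)/(n+1) + n·2^{n+1}/C(2n,n) for all n ≥ 1. -/
noncomputable def s (m : ℕ) : ℝ :=
  ∑ q ∈ Finset.Icc 1 m, (2 : ℝ) ^ q / (Nat.choose (2 * m) q : ℝ)

noncomputable def g (n q : ℕ) : ℝ :=
  (-3 * (q : ℝ) ^ 2 + (16 * (n : ℝ) + 15) * q - (20 * (n : ℝ) ^ 2 + 34 * n + 12)) * 2 ^ q /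
    ((2 * (n : ℝ) + 2) * (Nat.choose (2 * n) q : ℝ))

lemma choose_up (n q : ℕ) (hq : q ≤ 2 * n) :
    ((2 * n + 2).choose q : ℝ) * ((2 * (n : ℝ) + 2 - q) * (2 * (n : ℝ) + 1 - q)) =
      ((2 * n).choose q : ℝ) * ((2 * (n : ℝ) + 2) * (2 * (n : ℝ) + 1)) := by
  have h1 := Nat.choose_mul_succ_eq (2 * n) q
  have h2 := Nat.choose_mul_succ_eq (2 * n + 1) q
  have hq1 : q ≤ 2 * n + 1 := by omega
  have hq2 : q ≤ 2 * n + 2 := by omega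
  have c1 : ((2 * n).choose q : ℝ) * (2 * (n : ℝ) + 1) =
      ((2 * n + 1).choose q : ℝ) * (2 * (n : ℝ) + 1 - q) := by
    have := congrArg (Nat.cast : ℕ → ℝ) h1
    push_cast [Nat.cast_sub hq1] at this
    push_cast
    linarith
  have c2 : ((2 * n + 1).choose q : ℝ) * (2 * (n : ℝ) + 2) =
      ((2 * n + 2).choose q : ℝ) * (2 * (n : ℝ) + 2 - q) := by
    have := congrArg (Nat.cast : ℕ → ℝ) h2
    push_cast [Nat.cast_sub hq2] at this
    push_cast
    linarith
  nlinarith [c1, c2]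

lemma choose_right (n q : ℕ) (hq : q ≤ 2 * n) :
    ((2 * n).choose (q + 1) : ℝ) * ((q : ℝ) + 1) =
      ((2 * n).choose q : ℝ) * (2 * (n : ℝ) - q) := by
  have h := congrArg (Nat.cast : ℕ → ℝ) (Nat.choose_succ_right_eq (2 * n) q)
  push_cast [Nat.cast_sub hq] at h
  push_cast
  linarith

lemma step (n q : ℕ) (hn : 1 ≤ n) (hq1 : 1 ≤ q) (hq : q ≤ n) :
    9 * (2 * (n : ℝ) + 1) * ((2 : ℝ) ^ q / (Nat.choose (2 * n + 2) q : ℝ)) -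
      4 * (2 * (n : ℝ) + 3) * ((2 : ℝ) ^ q / (Nat.choose (2 * n) q : ℝ)) =
    g n (q + 1) - g n q := by
  have hq2n : q ≤ 2 * n := by omega
  have hA := choose_right n q hq2n
  have hB := choose_up n q hq2n
  have hposa : (0 : ℝ) < ((2 * n).choose q : ℝ) := by
    exact_mod_cast Nat.choose_pos hq2n
  have hposb : (0 : ℝ) < ((2 * n).choose (q + 1) : ℝ) := by
    exact_mod_cast Nat.choose_pos (by omega : q + 1 ≤ 2 * n)
  have hposc : (0 : ℝ) < ((2 * n + 2).choose q : ℝ) := by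
    exact_mod_cast Nat.choose_pos (by omega : q ≤ 2 * n + 2)
  have hqn : (q : ℝ) ≤ (n : ℝ) := by exact_mod_cast hq
  have hn1 : (1 : ℝ) ≤ (n : ℝ) := by exact_mod_cast hn
  have d1 : (q : ℝ) + 1 ≠ 0 := by positivity
  have d2 : 2 * (n : ℝ) + 2 - q ≠ 0 := by nlinarith
  have d3 : 2 * (n : ℝ) + 1 - q ≠ 0 := by nlinarith
  have d4 : 2 * (n : ℝ) + 2 ≠ 0 := by positivity
  have d5 : 2 * (n : ℝ) - q ≠ 0 := by nlinarith
  have ha : ((2 * n).choose q : ℝ) ≠ 0 := hposa.ne'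
  have e1 : ((2 * n).choose (q + 1) : ℝ) =
      ((2 * n).choose q : ℝ) * (2 * (n : ℝ) - q) / ((q : ℝ) + 1) := by
    field_simp
    linarith
  have e2 : ((2 * n + 2).choose q : ℝ) =
      ((2 * n).choose q : ℝ) * ((2 * (n : ℝ) + 2) * (2 * (n : ℝ) + 1)) /
        ((2 * (n : ℝ) + 2 - q) * (2 * (n : ℝ) + 1 - q)) := by
    rw [eq_div_iff (by exact mul_ne_zero d2 d3)]
    linarith [hB]
  unfold g
  rw [e1, e2]
  push_cast
  have hp : (2 : ℝ) ^ (q + 1) = 2 * 2 ^ q := by ring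
  rw [hp]
  field_simp [ha, d1, d2, d3, d4, d5]
  ring

lemma telescope (n : ℕ) :
    ∑ q ∈ Finset.Icc 1 n, (g n (q + 1) - g n q) = g n (n + 1) - g n 1 := by
  rw [← Finset.Ico_add_one_right_eq_Icc, Finset.sum_Ico_eq_sum_range]
  have := Finset.sum_range_sub (fun i => g n (i + 1)) n
  simpa [Nat.add_comm] using this

theorem s_recursion (n : ℕ) (hn : 1 ≤ n) :
    9 * (2 * (n : ℝ) + 1) * s (n + 1) - 4 * (2 * (n : ℝ) + 3) * s n =
      (10 * (n : ℝ) + 9) / ((n : ℝ) + 1) +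
        (n : ℝ) * 2 ^ (n + 1) / (Nat.choose (2 * n) n : ℝ) := by
  have hsplit : s (n + 1) =
      (∑ q ∈ Finset.Icc 1 n, (2 : ℝ) ^ q / (Nat.choose (2 * n + 2) q : ℝ)) +
        (2 : ℝ) ^ (n + 1) / (Nat.choose (2 * n + 2) (n + 1) : ℝ) := by
    unfold s
    have h2 : 2 * (n + 1) = 2 * n + 2 := by ring
    rw [h2, Finset.sum_Icc_succ_top (by omega : 1 ≤ n + 1)]
  rw [hsplit]
  unfold s
  rw [mul_add, Finset.mul_sum, Finset.mul_sum]
  rw [add_sub_right_comm, ← Finset.sum_sub_distrib]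
  rw [Finset.sum_congr rfl (fun q hq => by
    obtain ⟨h1, h2⟩ := Finset.mem_Icc.mp hq
    exact step n q hn h1 h2)]
  rw [telescope]
  -- now pure algebra with g n (n+1), g n 1, choose values
  have hc0 : (0:ℝ) < ((2 * n).choose n : ℝ) := by
    exact_mod_cast Nat.choose_pos (by omega : n ≤ 2 * n)
  have hc1 : ((2 * n).choose (n + 1) : ℝ) * ((n : ℝ) + 1) =
      ((2 * n).choose n : ℝ) * (n : ℝ) := by
    have := choose_right n n (by omega)
    have hs : 2 * (n : ℝ) - n = (n : ℝ) := by ring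
    rw [hs] at this
    exact this
  have hc2 : ((2 * n + 2).choose (n + 1) : ℝ) * (((n : ℝ) + 1) * (n : ℝ)) =
      ((2 * n).choose (n + 1) : ℝ) * ((2 * (n : ℝ) + 2) * (2 * (n : ℝ) + 1)) := by
    have h := choose_up n (n + 1) (by omega)
    push_cast at h ⊢
    linear_combination h
  have hn1 : (1:ℝ) ≤ (n:ℝ) := by exact_mod_cast hn
  have dn : (n : ℝ) ≠ 0 := by positivity
  have dn1 : (n : ℝ) + 1 ≠ 0 := by positivity
  have hcn : ((2 * n).choose n : ℝ) ≠ 0 := hc0.ne'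
  have e1 : ((2 * n).choose (n + 1) : ℝ) =
      ((2 * n).choose n : ℝ) * (n : ℝ) / ((n : ℝ) + 1) := by
    field_simp; linarith
  have e2 : ((2 * n + 2).choose (n + 1) : ℝ) =
      ((2 * n).choose n : ℝ) * ((2 * (n : ℝ) + 2) * (2 * (n : ℝ) + 1)) /
        (((n : ℝ) + 1) * ((n : ℝ) + 1)) := by
    rw [e1] at hc2
    rw [eq_div_iff (by positivity)]
    field_simp at hc2
    nlinarith [hc2]
  unfold g
  rw [e1, e2, Nat.choose_one_right]
  have hp : (2 : ℝ) ^ (n + 1) = 2 * 2 ^ n := by ring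
  push_cast
  rw [hp]
  have d2n : 2 * (n:ℝ) ≠ 0 := by positivity
  have d2n1 : 2 * (n:ℝ) + 1 ≠ 0 := by positivity
  have d2n2 : 2 * (n:ℝ) + 2 ≠ 0 := by positivity
  field_simp
  ring
end

section
/- For all n ≥ 23, s_n ≤ (n+10)/(n(n−1)), where s_n = Σ_{q=1}^{n} 2^q / C(2n,q). -/
private lemma pow_aux (n : ℕ) (hn : 23 ≤ n) : n ^ 4 ≤ 2 ^ n := by
  induction n, hn using Nat.le_induction with
  | base => norm_num
  | succ m hm ih =>
    have h2 : (m + 1) ^ 4 ≤ 2 * m ^ 4 := by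
      have h23 : 23 * m ^ 3 ≤ m * m ^ 3 := Nat.mul_le_mul_right _ hm
      nlinarith [h23, hm]
    calc (m + 1) ^ 4 ≤ 2 * m ^ 4 := h2
      _ ≤ 2 * 2 ^ m := Nat.mul_le_mul le_rfl ih
      _ = 2 ^ (m + 1) := by ring

private lemma choose_step_up (n j : ℕ) (h : 3 * j + 2 ≤ 2 * n) :
    2 * (2 * n).choose j ≤ (2 * n).choose (j + 1) := by
  have h1 := Nat.choose_succ_right_eq (2 * n) j
  apply Nat.le_of_mul_le_mul_right _ (Nat.succ_pos j)
  calc 2 * (2 * n).choose j * (j + 1) = (2 * n).choose j * (2 * (j + 1)) := by ring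
    _ ≤ (2 * n).choose j * (2 * n - j) := Nat.mul_le_mul le_rfl (by omega)
    _ = (2 * n).choose (j + 1) * (j + 1) := h1.symm

private lemma choose_step_down (n j : ℕ) (h : 2 * n ≤ 3 * j + 2) :
    (2 * n).choose (j + 1) ≤ 2 * (2 * n).choose j := by
  have h1 := Nat.choose_succ_right_eq (2 * n) j
  apply Nat.le_of_mul_le_mul_right _ (Nat.succ_pos j)
  calc (2 * n).choose (j + 1) * (j + 1) = (2 * n).choose j * (2 * n - j) := h1
    _ ≤ (2 * n).choose j * (2 * (j + 1)) := Nat.mul_le_mul le_rfl (by omega)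
    _ = 2 * (2 * n).choose j * (j + 1) := by ring

private lemma keyA (n : ℕ) : ∀ q, 3 ≤ q → 3 * q ≤ 2 * n + 1 →
    2 ^ q * (2 * n).choose 3 ≤ 8 * (2 * n).choose q := by
  intro q hq
  induction q, hq using Nat.le_induction with
  | base => intro _; norm_num
  | succ m hm ih =>
    intro h
    have ihm := ih (by omega)
    have step := choose_step_up n m (by omega)
    calc 2 ^ (m + 1) * (2 * n).choose 3 = 2 * (2 ^ m * (2 * n).choose 3) := by ring
      _ ≤ 2 * (8 * (2 * n).choose m) := Nat.mul_le_mul le_rfl ihm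
      _ = 8 * (2 * (2 * n).choose m) := by ring
      _ ≤ 8 * (2 * n).choose (m + 1) := Nat.mul_le_mul le_rfl step

private lemma keyB (n q : ℕ) (hq : 2 * n + 2 ≤ 3 * q) :
    ∀ m, q ≤ m → 2 ^ q * (2 * n).choose m ≤ 2 ^ m * (2 * n).choose q := by
  intro m hm
  induction m, hm using Nat.le_induction with
  | base => exact le_rfl
  | succ k hk ih =>
    have step := choose_step_down n k (by omega)
    calc 2 ^ q * (2 * n).choose (k + 1) ≤ 2 ^ q * (2 * (2 * n).choose k) :=
          Nat.mul_le_mul le_rfl step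
      _ = 2 * (2 ^ q * (2 * n).choose k) := by ring
      _ ≤ 2 * (2 ^ k * (2 * n).choose q) := Nat.mul_le_mul le_rfl ih
      _ = 2 ^ (k + 1) * (2 * n).choose q := by ring

private lemma tn_le_t3 (n : ℕ) (hn : 23 ≤ n) :
    2 ^ n * (2 * n).choose 3 ≤ 8 * (2 * n).choose n := by
  have h2 : (2 * n).choose 2 * 2 = 2 * n * (2 * n - 1) := by
    simpa [Nat.choose_one_right] using Nat.choose_succ_right_eq (2 * n) 1
  have h3 : (2 * n).choose 3 * 3 = (2 * n).choose 2 * (2 * n - 2) :=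
    Nat.choose_succ_right_eq (2 * n) 2
  have h6 : (2 * n).choose 3 * 6 = 2 * n * (2 * n - 1) * (2 * n - 2) := by
    calc (2 * n).choose 3 * 6 = ((2 * n).choose 3 * 3) * 2 := by ring
      _ = ((2 * n).choose 2 * 2) * (2 * n - 2) := by rw [h3]; ring
      _ = 2 * n * (2 * n - 1) * (2 * n - 2) := by rw [h2]
  have hbound : 2 * n * (2 * n - 1) * (2 * n - 2) ≤ 8 * n ^ 3 := by
    calc 2 * n * (2 * n - 1) * (2 * n - 2) ≤ 2 * n * (2 * n) * (2 * n) :=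
        Nat.mul_le_mul (Nat.mul_le_mul le_rfl (Nat.sub_le _ _)) (Nat.sub_le _ _)
      _ = 8 * n ^ 3 := by ring
  have hc3 : 3 * (2 * n).choose 3 ≤ 4 * n ^ 3 := by omega
  have hpow := pow_aux n hn
  have hcb : 4 ^ n ≤ n * Nat.centralBinom n := (Nat.four_pow_lt_mul_centralBinom n (by omega)).le
  -- n * (4 * n^3 * 2^n) ≤ 4 * 4^n ≤ 4 * n * centralBinom n
  have hD : 4 * n ^ 3 * 2 ^ n ≤ 4 * Nat.centralBinom n := by
    apply Nat.le_of_mul_le_mul_left _ (show 0 < n by omega)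
    calc n * (4 * n ^ 3 * 2 ^ n) = 4 * (n ^ 4 * 2 ^ n) := by ring
      _ ≤ 4 * (2 ^ n * 2 ^ n) := Nat.mul_le_mul le_rfl (Nat.mul_le_mul hpow le_rfl)
      _ = 4 * 4 ^ n := by rw [← pow_add]; rw [show (4:ℕ) = 2 ^ 2 by norm_num, ← pow_mul]; ring_nf
      _ ≤ 4 * (n * Nat.centralBinom n) := Nat.mul_le_mul le_rfl hcb
      _ = n * (4 * Nat.centralBinom n) := by ring
  have hCn : Nat.centralBinom n = (2 * n).choose n := rfl
  apply Nat.le_of_mul_le_mul_left _ (show 0 < 3 by norm_num)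
  calc 3 * (2 ^ n * (2 * n).choose 3) = (3 * (2 * n).choose 3) * 2 ^ n := by ring
    _ ≤ 4 * n ^ 3 * 2 ^ n := Nat.mul_le_mul hc3 le_rfl
    _ ≤ 4 * Nat.centralBinom n := hD
    _ ≤ 24 * Nat.centralBinom n := Nat.mul_le_mul (by norm_num) le_rfl
    _ = 3 * (8 * (2 * n).choose n) := by rw [hCn]; ring

private lemma key_nat (n q : ℕ) (hn : 23 ≤ n) (h3 : 3 ≤ q) (hq : q ≤ n) :
    2 ^ q * (2 * n).choose 3 ≤ 8 * (2 * n).choose q := by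
  by_cases h : 3 * q ≤ 2 * n + 1
  · exact keyA n q h3 h
  · have hq2 : 2 * n + 2 ≤ 3 * q := by omega
    have hB := keyB n q hq2 n hq
    have hT := tn_le_t3 n hn
    apply Nat.le_of_mul_le_mul_left _ (show 0 < 2 ^ n from Nat.pow_pos (by norm_num))
    calc 2 ^ n * (2 ^ q * (2 * n).choose 3) = 2 ^ q * (2 ^ n * (2 * n).choose 3) := by ring
      _ ≤ 2 ^ q * (8 * (2 * n).choose n) := Nat.mul_le_mul le_rfl hT
      _ = 8 * (2 ^ q * (2 * n).choose n) := by ring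
      _ ≤ 8 * (2 ^ n * (2 * n).choose q) := Nat.mul_le_mul le_rfl hB
      _ = 2 ^ n * (8 * (2 * n).choose q) := by ring

theorem s_upper_bound (n : ℕ) (hn : 23 ≤ n) :
    s n ≤ ((n : ℝ) + 10) / ((n : ℝ) * ((n : ℝ) - 1)) := by
  have hN : (23 : ℝ) ≤ (n : ℝ) := by exact_mod_cast hn
  set N : ℝ := (n : ℝ) with hNdef
  have hN0 : (0 : ℝ) < N := by linarith
  have hN1 : (0 : ℝ) < N - 1 := by linarith
  have hN2 : (0 : ℝ) < N - 2 := by linarith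
  -- casts of binomial subtractions
  have hcast1 : ((2 * n - 1 : ℕ) : ℝ) = 2 * N - 1 := by
    have h : (1 : ℕ) ≤ 2 * n := by omega
    push_cast [h]; ring
  have hcast2 : ((2 * n - 2 : ℕ) : ℝ) = 2 * N - 2 := by
    have h : (2 : ℕ) ≤ 2 * n := by omega
    push_cast [h]; ring
  set C2 : ℝ := ((2 * n).choose 2 : ℝ) with hC2def
  set C3 : ℝ := ((2 * n).choose 3 : ℝ) with hC3def
  have hC2 : C2 * 2 = 2 * N * (2 * N - 1) := by
    have h := Nat.choose_succ_right_eq (2 * n) 1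
    rw [Nat.choose_one_right] at h
    have := congrArg (fun x : ℕ => (x : ℝ)) h
    push_cast at this
    rw [hcast1] at this
    linarith [this]
  have hC3 : C3 * 3 = C2 * (2 * N - 2) := by
    have h := Nat.choose_succ_right_eq (2 * n) 2
    have := congrArg (fun x : ℕ => (x : ℝ)) h
    push_cast at this
    rw [hcast2] at this
    linarith [this]
  have hC2pos : (0 : ℝ) < C2 := by
    rw [hC2def]; exact_mod_cast Nat.choose_pos (by omega)
  have hC3pos : (0 : ℝ) < C3 := by
    rw [hC3def]; exact_mod_cast Nat.choose_pos (by omega)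
  have h6 : C3 * 6 = 2 * N * (2 * N - 1) * (2 * N - 2) := by
    linear_combination 2 * hC3 + (2 * N - 2) * hC2
  -- split the sum
  have hsplit : Finset.Icc 1 n = insert 1 (insert 2 (Finset.Icc 3 n)) := by
    ext x
    simp only [Finset.mem_Icc, Finset.mem_insert]
    omega
  rw [s, hsplit, Finset.sum_insert (by simp only [Finset.mem_insert, Finset.mem_Icc]; omega),
    Finset.sum_insert (by simp only [Finset.mem_insert, Finset.mem_Icc]; omega)]
  -- bound the tail sum
  have hterm : ∀ q ∈ Finset.Icc 3 n, (2 : ℝ) ^ q / ((2 * n).choose q : ℝ) ≤ 8 / C3 := by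
    intro q hq
    rw [Finset.mem_Icc] at hq
    have hCqpos : (0 : ℝ) < ((2 * n).choose q : ℝ) := by
      exact_mod_cast Nat.choose_pos (by omega)
    rw [div_le_div_iff₀ hCqpos hC3pos]
    have hk := key_nat n q hn hq.1 hq.2
    calc (2 : ℝ) ^ q * C3 = ((2 ^ q * (2 * n).choose 3 : ℕ) : ℝ) := by
          rw [hC3def]; push_cast; ring
      _ ≤ ((8 * (2 * n).choose q : ℕ) : ℝ) := by exact_mod_cast hk
      _ = 8 * ((2 * n).choose q : ℝ) := by push_cast; ring
  have hcard : ((Finset.Icc 3 n).card : ℝ) ≤ N - 2 := by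
    rw [Nat.card_Icc]
    have h : (n + 1 - 3 : ℕ) = n - 2 := by omega
    rw [h]
    have : ((n - 2 : ℕ) : ℝ) = N - 2 := by
      have h2 : (2 : ℕ) ≤ n := by omega
      push_cast [h2]; ring
    rw [this]
  have hsum : ∑ q ∈ Finset.Icc 3 n, (2 : ℝ) ^ q / ((2 * n).choose q : ℝ) ≤ (N - 2) * (8 / C3) := by
    calc ∑ q ∈ Finset.Icc 3 n, (2 : ℝ) ^ q / ((2 * n).choose q : ℝ)
        ≤ ∑ _q ∈ Finset.Icc 3 n, 8 / C3 := Finset.sum_le_sum hterm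
      _ = ((Finset.Icc 3 n).card : ℝ) * (8 / C3) := by rw [Finset.sum_const, nsmul_eq_mul]
      _ ≤ (N - 2) * (8 / C3) := by
          apply mul_le_mul_of_nonneg_right hcard
          positivity
  -- the first two terms
  have ht1 : (2 : ℝ) ^ (1 : ℕ) / ((2 * n).choose 1 : ℝ) = 1 / N := by
    rw [Nat.choose_one_right]
    push_cast
    rw [pow_one]
    field_simp
    exact hNdef
  have ht2 : (2 : ℝ) ^ (2 : ℕ) / ((2 * n).choose 2 : ℝ) ≤ 2 / (N * (N - 1)) := by
    rw [show ((2 * n).choose 2 : ℝ) = C2 from rfl]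
    rw [div_le_div_iff₀ hC2pos (by positivity)]
    nlinarith [hC2]
  have ht3 : (N - 2) * (8 / C3) ≤ 6 / (N * (N - 1)) := by
    rw [mul_div_assoc']
    rw [div_le_div_iff₀ hC3pos (by positivity)]
    nlinarith [h6]
  have hfinal : 1 / N + 2 / (N * (N - 1)) + 6 / (N * (N - 1)) ≤ (N + 10) / (N * (N - 1)) := by
    have h1N : 1 / N = (N - 1) / (N * (N - 1)) := by
      rw [div_eq_div_iff hN0.ne' (by positivity : (0:ℝ) < N * (N - 1)).ne']; ring
    rw [h1N, ← add_div, ← add_div]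
    exact (div_le_div_iff_of_pos_right (by positivity)).mpr (by linarith)
  calc (2 : ℝ) ^ (1 : ℕ) / ((2 * n).choose 1 : ℝ) +
      ((2 : ℝ) ^ (2 : ℕ) / ((2 * n).choose 2 : ℝ) +
        ∑ q ∈ Finset.Icc 3 n, (2 : ℝ) ^ q / ((2 * n).choose q : ℝ))
      ≤ 1 / N + (2 / (N * (N - 1)) + (N - 2) * (8 / C3)) := by
        rw [ht1]
        exact add_le_add le_rfl (add_le_add ht2 hsum)
    _ ≤ 1 / N + (2 / (N * (N - 1)) + 6 / (N * (N - 1))) := by linarith [ht3]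
    _ ≤ (N + 10) / (N * (N - 1)) := by linarith [hfinal]
end

section
/- The sequence n·s_n converges to 1 as n → ∞, where s_n = Σ_{q=1}^{n} 2^q / C(2n,q). In other words, s_n is asymptotically equivalent to 1/n. -/
lemma choose2 (m : ℕ) : Nat.choose (m + 2) 2 * 2 = (m + 2) * (m + 1) := by
  have h := Nat.choose_succ_right_eq (m + 2) 1
  simp [Nat.choose_one_right] at h
  omega

lemma choose3 (m : ℕ) : Nat.choose (m + 3) 3 * 6 = (m + 3) * (m + 2) * (m + 1) := by
  have h := Nat.choose_succ_right_eq (m + 3) 2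
  have h2 := choose2 (m + 1)
  have h3 : m + 3 - 2 = m + 1 := by omega
  rw [h3] at h
  have : m + 1 + 2 = m + 3 := by omega
  rw [this] at h2
  nlinarith [h, h2]

lemma choose4 (m : ℕ) :
    Nat.choose (m + 4) 4 * 24 = (m + 4) * (m + 3) * (m + 2) * (m + 1) := by
  have h := Nat.choose_succ_right_eq (m + 4) 3
  have h3 : m + 4 - 3 = m + 1 := by omega
  rw [h3] at h
  have h2 := choose3 (m + 1)
  have : m + 1 + 3 = m + 4 := by omega
  rw [this] at h2
  nlinarith [h, h2]

/-- Key inductive inequality. -/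
lemma keyP (n q : ℕ) (hq : 3 ≤ q) (hqn : q ≤ n) :
    2 ^ q * ((2 * n - q + 1) * (2 * n - q + 2) * (2 * n - q + 3)) * Nat.choose n q
      ≤ 8 * ((n - q + 1) * (n - q + 2) * (n - q + 3)) * Nat.choose (2 * n) q := by
  induction q, hq using Nat.le_induction with
  | base =>
    obtain ⟨m, rfl⟩ : ∃ m, n = m + 3 := ⟨n - 3, by omega⟩
    have c3 := choose3 m
    have c3' := choose3 (2 * m + 3)
    have e : 2 * m + 3 + 3 = 2 * (m + 3) := by ring
    rw [e] at c3'
    have e1 : 2 * (m + 3) - 3 + 1 = 2 * m + 4 := by omega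
    have e2 : 2 * (m + 3) - 3 + 2 = 2 * m + 5 := by omega
    have e3 : 2 * (m + 3) - 3 + 3 = 2 * m + 6 := by omega
    rw [e1, e2, e3]
    have e4 : m + 3 - 3 + 1 = m + 1 := by omega
    have e5 : m + 3 - 3 + 2 = m + 2 := by omega
    have e6 : m + 3 - 3 + 3 = m + 3 := by omega
    rw [e4, e5, e6]
    nlinarith [c3, c3']
  | succ q hq3 IH =>
    have hqn' : q ≤ n := by omega
    have IH' := IH hqn'
    obtain ⟨a, rfl⟩ : ∃ a, n = q + 1 + a := ⟨n - q - 1, by omega⟩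
    -- rewrite all subtractions
    set n := q + 1 + a with hn
    have e1 : n - (q + 1) + 1 = a + 1 := by omega
    have e2 : n - (q + 1) + 2 = a + 2 := by omega
    have e3 : n - (q + 1) + 3 = a + 3 := by omega
    have f1 : 2 * n - (q + 1) + 1 = q + 2 * a + 2 := by omega
    have f2 : 2 * n - (q + 1) + 2 = q + 2 * a + 3 := by omega
    have f3 : 2 * n - (q + 1) + 3 = q + 2 * a + 4 := by omega
    rw [e1, e2, e3, f1, f2, f3]
    have g1 : n - q + 1 = a + 2 := by omega
    have g2 : n - q + 2 = a + 3 := by omega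
    have g3 : n - q + 3 = a + 4 := by omega
    have g4 : 2 * n - q + 1 = q + 2 * a + 3 := by omega
    have g5 : 2 * n - q + 2 = q + 2 * a + 4 := by omega
    have g6 : 2 * n - q + 3 = q + 2 * a + 5 := by omega
    rw [g1, g2, g3, g4, g5, g6] at IH'
    -- choose identities
    have idc : Nat.choose n (q + 1) * (q + 1) = Nat.choose n q * (a + 1) := by
      have := Nat.choose_succ_right_eq n q
      have : n - q = a + 1 := by omega
      rw [Nat.choose_succ_right_eq, this]
    have idC : Nat.choose (2 * n) (q + 1) * (q + 1)
        = Nat.choose (2 * n) q * (q + 2 * a + 2) := by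
      have : 2 * n - q = q + 2 * a + 2 := by omega
      rw [Nat.choose_succ_right_eq, this]
    -- cancel (q+1)*(a+4)
    have hpos : 0 < (q + 1) * (a + 4) := by positivity
    apply Nat.le_of_mul_le_mul_right ?_ hpos
    calc 2 ^ (q + 1) * ((q + 2 * a + 2) * (q + 2 * a + 3) * (q + 2 * a + 4)) *
            Nat.choose n (q + 1) * ((q + 1) * (a + 4))
        = (Nat.choose n (q + 1) * (q + 1)) *
            (2 ^ (q + 1) * ((q + 2 * a + 2) * (q + 2 * a + 3) * (q + 2 * a + 4)) * (a + 4)) := by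
          ring
      _ = (Nat.choose n q * (a + 1)) *
            (2 ^ (q + 1) * ((q + 2 * a + 2) * (q + 2 * a + 3) * (q + 2 * a + 4)) * (a + 4)) := by
          rw [idc]
      _ = ((a + 1) * (q + 2 * a + 2)) * (2 * (a + 4)) *
            (2 ^ q * ((q + 2 * a + 3) * (q + 2 * a + 4)) * Nat.choose n q) := by
          ring
      _ ≤ ((a + 1) * (q + 2 * a + 2)) * (q + 2 * a + 5) *
            (2 ^ q * ((q + 2 * a + 3) * (q + 2 * a + 4)) * Nat.choose n q) := by
          have : 2 * (a + 4) ≤ q + 2 * a + 5 := by omega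
          exact Nat.mul_le_mul_right _ (Nat.mul_le_mul_left _ this)
      _ = ((a + 1) * (q + 2 * a + 2)) *
            (2 ^ q * ((q + 2 * a + 3) * (q + 2 * a + 4) * (q + 2 * a + 5)) * Nat.choose n q) := by
          ring
      _ ≤ ((a + 1) * (q + 2 * a + 2)) *
            (8 * ((a + 2) * (a + 3) * (a + 4)) * Nat.choose (2 * n) q) := by
          exact Nat.mul_le_mul_left _ IH'
      _ = 8 * ((a + 1) * (a + 2) * (a + 3)) *
            (Nat.choose (2 * n) q * (q + 2 * a + 2)) * (a + 4) := by ring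
      _ = 8 * ((a + 1) * (a + 2) * (a + 3)) *
            (Nat.choose (2 * n) (q + 1) * (q + 1)) * (a + 4) := by rw [idC]
      _ = 8 * ((a + 1) * (a + 2) * (a + 3)) * Nat.choose (2 * n) (q + 1) *
            ((q + 1) * (a + 4)) := by ring

/-- The main term bound: for 4 ≤ q ≤ n, 2^q * n³ ≤ 192 * C(2n, q). -/
lemma keyL (n q : ℕ) (hq : 4 ≤ q) (hqn : q ≤ n) :
    2 ^ q * n ^ 3 ≤ 192 * Nat.choose (2 * n) q := by
  have hP := keyP n q (by omega) hqn
  set k := n - q with hk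
  -- (k+1)(k+2)(k+3) ≤ 24 * C(n, k)
  have hB : (k + 1) * (k + 2) * (k + 3) ≤ 24 * Nat.choose n k := by
    have h1 : Nat.choose (k + 4) k ≤ Nat.choose n k := Nat.choose_le_choose k (by omega)
    have h2 : Nat.choose (k + 4) k = Nat.choose (k + 4) 4 := by
      have := Nat.choose_symm (n := k + 4) (k := 4) (by omega)
      simpa [Nat.add_sub_cancel] using this
    have h3 := choose4 k
    calc (k + 1) * (k + 2) * (k + 3)
        ≤ (k + 4) * (k + 3) * (k + 2) * (k + 1) := by nlinarith
      _ = Nat.choose (k + 4) 4 * 24 := h3.symm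
      _ ≤ Nat.choose n k * 24 := by
          have := h2 ▸ h1
          exact Nat.mul_le_mul_right _ this
      _ = 24 * Nat.choose n k := by ring
  have hsymm : Nat.choose n k = Nat.choose n q := by
    rw [hk, Nat.choose_symm hqn]
  rw [hsymm] at hB
  -- each factor 2n - q + j ≥ n
  have hf1 : n ≤ 2 * n - q + 1 := by omega
  have hf2 : n ≤ 2 * n - q + 2 := by omega
  have hf3 : n ≤ 2 * n - q + 3 := by omega
  -- combine
  have step1 : 2 ^ q * n ^ 3 * Nat.choose n q
      ≤ 8 * ((k + 1) * (k + 2) * (k + 3)) * Nat.choose (2 * n) q := by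
    calc 2 ^ q * n ^ 3 * Nat.choose n q
        = 2 ^ q * (n * n * n) * Nat.choose n q := by ring
      _ ≤ 2 ^ q * ((2 * n - q + 1) * (2 * n - q + 2) * (2 * n - q + 3)) * Nat.choose n q := by
          apply Nat.mul_le_mul_right
          apply Nat.mul_le_mul_left
          exact Nat.mul_le_mul (Nat.mul_le_mul hf1 hf2) hf3
      _ ≤ _ := hP
  -- multiply hB and cancel
  have key : 2 ^ q * n ^ 3 * ((k + 1) * (k + 2) * (k + 3))
      ≤ 192 * Nat.choose (2 * n) q * ((k + 1) * (k + 2) * (k + 3)) := by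
    calc 2 ^ q * n ^ 3 * ((k + 1) * (k + 2) * (k + 3))
        ≤ 2 ^ q * n ^ 3 * (24 * Nat.choose n q) := Nat.mul_le_mul_left _ hB
      _ = 24 * (2 ^ q * n ^ 3 * Nat.choose n q) := by ring
      _ ≤ 24 * (8 * ((k + 1) * (k + 2) * (k + 3)) * Nat.choose (2 * n) q) :=
          Nat.mul_le_mul_left _ step1
      _ = 192 * Nat.choose (2 * n) q * ((k + 1) * (k + 2) * (k + 3)) := by ring
  have hpos : 0 < (k + 1) * (k + 2) * (k + 3) := by positivity
  exact Nat.le_of_mul_le_mul_right key hpos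

theorem s_asymptotic :
    Filter.Tendsto (fun n : ℕ => (n : ℝ) * s n) Filter.atTop (nhds 1) := by
  have hlow : ∀ n : ℕ, 4 ≤ n → (1 : ℝ) ≤ (n : ℝ) * s n := by
    intro n hn
    have hn0 : (0 : ℝ) < n := by positivity
    have h1mem : (1 : ℕ) ∈ Finset.Icc 1 n := by simp; omega
    have hterm : ∀ q ∈ Finset.Icc 1 n, (0 : ℝ) ≤ (2 : ℝ) ^ q / (Nat.choose (2 * n) q : ℝ) := by
      intro q _
      positivity
    have hs : (2 : ℝ) ^ 1 / (Nat.choose (2 * n) 1 : ℝ) ≤ s n :=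
      Finset.single_le_sum hterm h1mem
    have hv : (2 : ℝ) ^ 1 / (Nat.choose (2 * n) 1 : ℝ) = 1 / n := by
      rw [Nat.choose_one_right]
      push_cast
      rw [pow_one]
      field_simp
    rw [hv] at hs
    calc (1 : ℝ) = n * (1 / n) := by field_simp
      _ ≤ n * s n := by
          apply mul_le_mul_of_nonneg_left hs (le_of_lt hn0)
  have hhigh : ∀ n : ℕ, 4 ≤ n → (n : ℝ) * s n ≤ 1 + 220 / n := by
    intro n hn
    have hn0 : (0 : ℝ) < n := by positivity
    set f : ℕ → ℝ := fun q => (2 : ℝ) ^ q / (Nat.choose (2 * n) q : ℝ) with hf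
    have hsplit : s n = f 1 + f 2 + f 3 + ∑ q ∈ Finset.Ioc 3 n, f q := by
      rw [s, show Finset.Icc 1 n = Finset.Ioc 0 n from Finset.Icc_add_one_left_eq_Ioc 0 n]
      rw [← Finset.sum_Ioc_consecutive f (by omega : (0:ℕ) ≤ 3) (by omega : (3:ℕ) ≤ n)]
      have : ∑ q ∈ Finset.Ioc 0 3, f q = f 1 + f 2 + f 3 := by
        rw [show Finset.Ioc (0:ℕ) 3 = {1, 2, 3} from by decide]
        rw [Finset.sum_insert (by decide), Finset.sum_insert (by decide),
          Finset.sum_singleton]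
        ring
      rw [this]
    -- f 1 = 1 / n
    have hf1 : f 1 = 1 / n := by
      simp only [hf, Nat.choose_one_right, pow_one]
      push_cast
      field_simp
    -- f 2 ≤ 4 / n²
    have hc2 : (n : ℕ) * n ≤ Nat.choose (2 * n) 2 := by
      have := choose2 (2 * n - 2)
      have e : 2 * n - 2 + 2 = 2 * n := by omega
      rw [e] at this
      nlinarith [this]
    have hf2 : f 2 ≤ 4 / ((n : ℝ) * n) := by
      simp only [hf]
      have hpos : (0 : ℝ) < (n : ℝ) * n := by positivity
      have hcpos : (0 : ℝ) < (Nat.choose (2 * n) 2 : ℝ) := by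
        have : 0 < Nat.choose (2 * n) 2 := Nat.choose_pos (by omega)
        exact_mod_cast this
      rw [div_le_div_iff₀ hcpos hpos]
      have : ((n : ℝ) * n) ≤ (Nat.choose (2 * n) 2 : ℝ) := by exact_mod_cast hc2
      nlinarith
    -- f 3 ≤ 24 / n³
    have hc3 : (n : ℕ) * n * n ≤ 3 * Nat.choose (2 * n) 3 := by
      have := choose3 (2 * n - 3)
      have e : 2 * n - 3 + 3 = 2 * n := by omega
      rw [e] at this
      have e1 : 2 * n - 3 + 2 = 2 * n - 1 := by omega
      have e2 : 2 * n - 3 + 1 = 2 * n - 2 := by omega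
      rw [e1, e2] at this
      have hp : 2 * n * (n * n) ≤ 2 * n * ((2 * n - 1) * (2 * n - 2)) :=
        Nat.mul_le_mul_left _ (Nat.mul_le_mul (by omega : n ≤ 2 * n - 1) (by omega : n ≤ 2 * n - 2))
      nlinarith [this, hp]
    have hf3 : f 3 ≤ 24 / ((n : ℝ) * n * n) := by
      simp only [hf]
      have hpos : (0 : ℝ) < (n : ℝ) * n * n := by positivity
      have hcpos : (0 : ℝ) < (Nat.choose (2 * n) 3 : ℝ) := by
        have : 0 < Nat.choose (2 * n) 3 := Nat.choose_pos (by omega)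
        exact_mod_cast this
      rw [div_le_div_iff₀ hcpos hpos]
      have : ((n : ℝ) * n * n) ≤ 3 * (Nat.choose (2 * n) 3 : ℝ) := by exact_mod_cast hc3
      nlinarith
    -- tail bound
    have htail : ∑ q ∈ Finset.Ioc 3 n, f q ≤ (n : ℝ) * (192 / ((n:ℝ) * n * n)) := by
      have hb : ∀ q ∈ Finset.Ioc 3 n, f q ≤ 192 / ((n:ℝ) * n * n) := by
        intro q hq
        rw [Finset.mem_Ioc] at hq
        have hL := keyL n q (by omega) hq.2
        simp only [hf]
        have hpos : (0 : ℝ) < (n : ℝ) * n * n := by positivity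
        have hcpos : (0 : ℝ) < (Nat.choose (2 * n) q : ℝ) := by
          have : 0 < Nat.choose (2 * n) q := Nat.choose_pos (by omega)
          exact_mod_cast this
        rw [div_le_div_iff₀ hcpos hpos]
        have : ((2:ℝ) ^ q * ((n:ℝ) * n * n)) ≤ 192 * (Nat.choose (2*n) q : ℝ) := by
          have := hL
          have hcast : ((2 ^ q * n ^ 3 : ℕ) : ℝ) ≤ ((192 * Nat.choose (2 * n) q : ℕ) : ℝ) := by
            exact_mod_cast this
          push_cast at hcast
          nlinarith [hcast]
        linarith
      calc ∑ q ∈ Finset.Ioc 3 n, f q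
          ≤ ∑ _q ∈ Finset.Ioc 3 n, (192 / ((n:ℝ) * n * n)) := Finset.sum_le_sum hb
        _ = (Finset.Ioc 3 n).card * (192 / ((n:ℝ) * n * n)) := by
            rw [Finset.sum_const, nsmul_eq_mul]
        _ ≤ (n : ℝ) * (192 / ((n:ℝ) * n * n)) := by
            apply mul_le_mul_of_nonneg_right _ (by positivity)
            rw [Nat.card_Ioc]
            exact_mod_cast (by omega : n - 3 ≤ n)
    -- combine
    rw [hsplit]
    have expand : (n : ℝ) * (f 1 + f 2 + f 3 + ∑ q ∈ Finset.Ioc 3 n, f q)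
        = n * f 1 + n * f 2 + n * f 3 + n * ∑ q ∈ Finset.Ioc 3 n, f q := by ring
    rw [expand]
    have t1 : (n : ℝ) * f 1 = 1 := by rw [hf1]; field_simp
    have t2 : (n : ℝ) * f 2 ≤ 4 / n := by
      calc (n : ℝ) * f 2 ≤ n * (4 / ((n:ℝ) * n)) :=
            mul_le_mul_of_nonneg_left hf2 (le_of_lt hn0)
        _ = 4 / n := by field_simp
    have t3 : (n : ℝ) * f 3 ≤ 24 / n := by
      calc (n : ℝ) * f 3 ≤ n * (24 / ((n:ℝ) * n * n)) :=
            mul_le_mul_of_nonneg_left hf3 (le_of_lt hn0)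
        _ = 24 / (n * n) := by field_simp
        _ ≤ 24 / n := by
            have hn1 : (1 : ℝ) ≤ n := by exact_mod_cast (by omega : 1 ≤ n)
            apply div_le_div_of_nonneg_left (by norm_num) hn0
            nlinarith [hn1]
    have t4 : (n : ℝ) * ∑ q ∈ Finset.Ioc 3 n, f q ≤ 192 / n := by
      calc (n : ℝ) * ∑ q ∈ Finset.Ioc 3 n, f q
          ≤ n * ((n : ℝ) * (192 / ((n:ℝ) * n * n))) :=
            mul_le_mul_of_nonneg_left htail (le_of_lt hn0)
        _ = 192 / n := by field_simp
    rw [t1]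
    have : 4 / (n:ℝ) + 24 / n + 192 / n = 220 / n := by ring
    linarith
  -- squeeze
  have hupper : Filter.Tendsto (fun n : ℕ => 1 + 220 / (n : ℝ)) Filter.atTop (nhds 1) := by
    have := (tendsto_const_nhds (x := (1:ℝ)) (f := Filter.atTop (α := ℕ))).add
      (tendsto_const_div_atTop_nhds_zero_nat 220)
    simpa using this
  apply tendsto_of_tendsto_of_tendsto_of_le_of_le' tendsto_const_nhds hupper
  · filter_upwards [Filter.eventually_ge_atTop 4] with n hn
    exact hlow n hn
  · filter_upwards [Filter.eventually_ge_atTop 4] with n hn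
    exact hhigh n hn
end

section
/- Define a_0 = 1 and a_{n+1} = Σ_{q=0}^{n} a_q · a_{n−q} · 2^{min(q, n−q)}. Fix β with 1/2 < β < 1, let k_β = 1/(2^{2β−1}(1 − 1/2^{2β−1})^2), and choose a constant c_β ≥ 1 and integer N such that a_i ≤ c_β^i·(i!)^β for all 0 ≤ i ≤ N and 2(1 + 2^β·k_β) ≤ c_β·(N+1)^β. Then a_n ≤ c_β^n·(n!)^β for all n ≥ 0. -/
open Real Finset

lemma mp_choose_lb (p n : ℕ) (hp : 1 ≤ p) (hn : 2 * p ≤ n) :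
    4 ^ p ≤ 2 * p * n.choose p := by
  calc 4 ^ p ≤ 2 * p * p.centralBinom :=
        Nat.four_pow_le_two_mul_self_mul_centralBinom p hp
    _ ≤ 2 * p * n.choose p := by
        have : p.centralBinom ≤ n.choose p := by
          rw [Nat.centralBinom]
          exact Nat.choose_le_choose p hn
        exact Nat.mul_le_mul_left _ this

lemma mp_pow_key (β : ℝ) (hβ1 : 1 / 2 < β) (hβ2 : β < 1) (p n : ℕ)
    (hp : 1 ≤ p) (hn : 2 * p ≤ n) :
    (2 : ℝ) ^ p ≤ ((n.choose p : ℝ)) ^ β *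
      ((2 : ℝ) ^ β * (p : ℝ) * ((2 : ℝ) ^ (1 - 2 * β)) ^ p) := by
  have hβ0 : (0 : ℝ) ≤ β := by linarith
  have hP1 : (1 : ℝ) ≤ (p : ℝ) := by exact_mod_cast hp
  have hP0 : (0 : ℝ) < (p : ℝ) := by linarith
  have hClb : (4 : ℝ) ^ p / (2 * (p : ℝ)) ≤ (n.choose p : ℝ) := by
    rw [div_le_iff₀ (by positivity)]
    have := mp_choose_lb p n hp hn
    have : ((4 : ℕ) ^ p : ℝ) ≤ ((2 * p * n.choose p : ℕ) : ℝ) := by exact_mod_cast this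
    push_cast at this
    linarith
  have h1 : ((4 : ℝ) ^ p / (2 * (p : ℝ))) ^ β ≤ ((n.choose p : ℝ)) ^ β :=
    Real.rpow_le_rpow (by positivity) hClb hβ0
  have hrhs0 : (0 : ℝ) ≤ (2 : ℝ) ^ β * (p : ℝ) * ((2 : ℝ) ^ (1 - 2 * β)) ^ p := by positivity
  refine le_trans ?_ (mul_le_mul_of_nonneg_right h1 hrhs0)
  have e4 : ((4 : ℝ) ^ p) = (2 : ℝ) ^ (2 * (p : ℝ)) := by
    rw [show (4:ℝ) = (2:ℝ) ^ (2:ℝ) by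
      rw [show (2:ℝ) = ((2:ℕ):ℝ) by norm_num, Real.rpow_natCast]; norm_num]
    rw [← Real.rpow_natCast ((2:ℝ) ^ (2:ℝ)) p, ← Real.rpow_mul (by norm_num)]
  have ex : ((2 : ℝ) ^ (1 - 2 * β)) ^ p = (2 : ℝ) ^ ((1 - 2 * β) * (p : ℝ)) := by
    rw [← Real.rpow_natCast ((2:ℝ) ^ (1 - 2*β)) p, ← Real.rpow_mul (by norm_num)]
  have e2p : ((2 : ℝ) * (p : ℝ)) ^ β = (2 : ℝ) ^ β * (p : ℝ) ^ β :=
    Real.mul_rpow (by norm_num) (le_of_lt hP0)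
  have e4b : ((2 : ℝ) ^ (2 * (p : ℝ))) ^ β = (2 : ℝ) ^ (2 * (p : ℝ) * β) := by
    rw [← Real.rpow_mul (by norm_num)]
  rw [Real.div_rpow (by positivity) (by positivity), e4, ex, e2p, e4b]
  have h2b : (0:ℝ) < (2:ℝ) ^ β := Real.rpow_pos_of_pos (by norm_num) β
  have hpb : (0:ℝ) < (p:ℝ) ^ β := Real.rpow_pos_of_pos hP0 β
  have key : (2 : ℝ) ^ (2 * (p:ℝ) * β) / ((2:ℝ)^β * (p:ℝ)^β) *
      ((2:ℝ)^β * (p:ℝ) * (2:ℝ) ^ ((1 - 2*β) * (p:ℝ)))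
      = ((2:ℝ) ^ (2 * (p:ℝ) * β) * (2:ℝ) ^ ((1 - 2*β) * (p:ℝ))) * ((p:ℝ) / (p:ℝ)^β) := by
    field_simp
  rw [key, ← Real.rpow_add (by norm_num : (0:ℝ) < 2)]
  have eexp : 2 * (p:ℝ) * β + (1 - 2*β) * (p:ℝ) = (p:ℝ) := by ring
  rw [eexp]
  have hq : (1:ℝ) ≤ (p:ℝ) / (p:ℝ)^β := by
    rw [le_div_iff₀ hpb, one_mul]
    calc (p:ℝ) ^ β ≤ (p:ℝ) ^ (1:ℝ) :=
          Real.rpow_le_rpow_of_exponent_le hP1 (by linarith)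
      _ = (p:ℝ) := Real.rpow_one _
  calc (2:ℝ) ^ p = (2:ℝ) ^ ((p:ℕ):ℝ) := (Real.rpow_natCast 2 p).symm
    _ = (2:ℝ) ^ ((p:ℝ)) * 1 := by rw [mul_one]
    _ ≤ (2:ℝ) ^ ((p:ℝ)) * ((p:ℝ) / (p:ℝ)^β) :=
        mul_le_mul_of_nonneg_left hq (le_of_lt (Real.rpow_pos_of_pos two_pos _))

noncomputable def mpT (β : ℝ) (m : ℕ) : ℝ :=
  if m = 0 then 1 else (2:ℝ) ^ β * (m : ℝ) * ((2 : ℝ) ^ (1 - 2 * β)) ^ m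

lemma mpT_nonneg (β : ℝ) (m : ℕ) : 0 ≤ mpT β m := by
  unfold mpT; split <;> positivity

lemma mp_term (β : ℝ) (hβ1 : 1 / 2 < β) (hβ2 : β < 1) (n q : ℕ) (hq : q ≤ n) :
    (q.factorial : ℝ) ^ β * ((n - q).factorial : ℝ) ^ β * 2 ^ (min q (n - q)) ≤
    (n.factorial : ℝ) ^ β * mpT β (min q (n - q)) := by
  have hβ0 : (0 : ℝ) ≤ β := by linarith
  set m := min q (n - q) with hm
  have hfacs : (q.factorial : ℝ) ^ β * ((n - q).factorial : ℝ) ^ β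
      = (m.factorial : ℝ) ^ β * ((n - m).factorial : ℝ) ^ β := by
    rcases le_total q (n - q) with h | h
    · have h1 : m = q := min_eq_left h
      rw [h1]
    · have h1 : m = n - q := min_eq_right h
      rw [h1, show n - (n - q) = q by omega, mul_comm]
  rw [hfacs]
  rcases Nat.eq_zero_or_pos m with h0 | hpos
  · rw [h0]
    simp [mpT, Nat.sub_zero]
  · have h2m : 2 * m ≤ n := by omega
    have hmn : m ≤ n := by omega
    have hfac : n.choose m * m.factorial * (n - m).factorial = n.factorial :=
      Nat.choose_mul_factorial_mul_factorial hmn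
    have hfacR : (n.factorial : ℝ) = (n.choose m : ℝ) * (m.factorial : ℝ) * ((n - m).factorial : ℝ) := by
      exact_mod_cast hfac.symm
    have hsplit : (n.factorial : ℝ) ^ β
        = (n.choose m : ℝ) ^ β * ((m.factorial : ℝ) ^ β * ((n - m).factorial : ℝ) ^ β) := by
      rw [hfacR, Real.mul_rpow (by positivity) (by positivity),
        Real.mul_rpow (by positivity) (by positivity)]
      ring
    have key := mp_pow_key β hβ1 hβ2 m n hpos h2m
    have hT : mpT β m = (2:ℝ) ^ β * (m : ℝ) * ((2 : ℝ) ^ (1 - 2 * β)) ^ m := by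
      unfold mpT; rw [if_neg (by omega)]
    rw [hsplit, hT]
    have hG : (0:ℝ) ≤ (m.factorial : ℝ) ^ β * ((n - m).factorial : ℝ) ^ β := by positivity
    calc (m.factorial : ℝ) ^ β * ((n - m).factorial : ℝ) ^ β * 2 ^ m
        ≤ (m.factorial : ℝ) ^ β * ((n - m).factorial : ℝ) ^ β *
          ((n.choose m : ℝ) ^ β * ((2:ℝ) ^ β * (m : ℝ) * ((2 : ℝ) ^ (1 - 2 * β)) ^ m)) :=
          mul_le_mul_of_nonneg_left key hG
      _ = (n.choose m : ℝ) ^ β * ((m.factorial : ℝ) ^ β * ((n - m).factorial : ℝ) ^ β) *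
          ((2:ℝ) ^ β * (m : ℝ) * ((2 : ℝ) ^ (1 - 2 * β)) ^ m) := by ring

lemma mp_sumT (β : ℝ) (hβ1 : 1 / 2 < β) (hβ2 : β < 1) (n : ℕ) :
    ∑ q ∈ Finset.range (n + 1), mpT β q ≤
      1 + (2:ℝ) ^ β * ((2:ℝ) ^ (1 - 2 * β) / (1 - (2:ℝ) ^ (1 - 2 * β)) ^ 2) := by
  set x := (2:ℝ) ^ (1 - 2 * β) with hxdef
  have hx0 : 0 < x := Real.rpow_pos_of_pos (by norm_num) _
  have hx1 : x < 1 := Real.rpow_lt_one_of_one_lt_of_neg (by norm_num) (by linarith)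
  have hsum : HasSum (fun i : ℕ => (i : ℝ) * x ^ i) (x / (1 - x) ^ 2) :=
    hasSum_coe_mul_geometric_of_norm_lt_one
      (by rw [Real.norm_eq_abs, abs_of_pos hx0]; exact hx1)
  have hfin : ∑ i ∈ Finset.range (n + 1), (i : ℝ) * x ^ i ≤ x / (1 - x) ^ 2 :=
    Summable.sum_le_tsum _ (fun i _ => by positivity) hsum.summable |>.trans_eq hsum.tsum_eq
  rw [Finset.sum_range_succ']
  have hT0 : mpT β 0 = 1 := by unfold mpT; simp
  have hTs : ∀ q : ℕ, mpT β (q + 1) = (2:ℝ) ^ β * ((q + 1 : ℕ) : ℝ) * x ^ (q + 1) := by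
    intro q; unfold mpT; rw [if_neg (by omega)]
  rw [hT0]
  have e1 : ∑ i ∈ Finset.range n, mpT β (i + 1)
      = (2:ℝ) ^ β * ∑ i ∈ Finset.range n, ((i + 1 : ℕ) : ℝ) * x ^ (i + 1) := by
    rw [Finset.mul_sum]
    exact Finset.sum_congr rfl (fun i _ => by rw [hTs i]; ring)
  rw [e1]
  have e2 : ∑ i ∈ Finset.range n, ((i + 1 : ℕ) : ℝ) * x ^ (i + 1)
      = ∑ i ∈ Finset.range (n + 1), (i : ℝ) * x ^ i := by
    rw [Finset.sum_range_succ']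
    push_cast
    simp
  rw [e2]
  have h2b : (0:ℝ) ≤ (2:ℝ) ^ β := le_of_lt (Real.rpow_pos_of_pos (by norm_num) _)
  nlinarith [mul_le_mul_of_nonneg_left hfin h2b]

theorem mp_count_upper_bound (a : ℕ → ℕ)
    (ha0 : a 0 = 1)
    (harec : ∀ n : ℕ,
      a (n + 1) = ∑ q ∈ Finset.range (n + 1), a q * a (n - q) * 2 ^ (min q (n - q)))
    (β : ℝ) (hβ1 : 1 / 2 < β) (hβ2 : β < 1)
    (k : ℝ) (hk : k = 1 / ((2 : ℝ) ^ (2 * β - 1) * (1 - 1 / (2 : ℝ) ^ (2 * β - 1)) ^ 2))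
    (c : ℝ) (hc : 1 ≤ c) (N : ℕ)
    (hinit : ∀ i ≤ N, (a i : ℝ) ≤ c ^ i * (i.factorial : ℝ) ^ β)
    (hN : 2 * (1 + (2 : ℝ) ^ β * k) ≤ c * ((N : ℝ) + 1) ^ β) :
    ∀ n : ℕ, (a n : ℝ) ≤ c ^ n * (n.factorial : ℝ) ^ β := by
  have hβ0 : (0:ℝ) ≤ β := by linarith
  set x := (2:ℝ) ^ (1 - 2 * β) with hxdef
  have hx0 : 0 < x := Real.rpow_pos_of_pos (by norm_num) _
  have hx1 : x < 1 := Real.rpow_lt_one_of_one_lt_of_neg (by norm_num) (by linarith)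
  have hxinv : (2:ℝ) ^ (2 * β - 1) = x⁻¹ := by
    rw [hxdef, ← Real.rpow_neg (by norm_num : (0:ℝ) ≤ 2)]
    norm_num
  have hkx : k = x / (1 - x) ^ 2 := by
    have hxne : x ≠ 0 := ne_of_gt hx0
    have h1x : (1 - x) ≠ 0 := by intro h; rw [sub_eq_zero] at h; linarith
    rw [hk, hxinv, show (1:ℝ) / x⁻¹ = x by field_simp]
    field_simp
  intro n
  induction n using Nat.strong_induction_on with
  | _ n ih =>
    by_cases hn : n ≤ N
    · exact hinit n hn
    · push_neg at hn
      obtain ⟨m, rfl⟩ : ∃ m, n = m + 1 := ⟨n - 1, by omega⟩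
      have hmN : N ≤ m := by omega
      rw [harec m]
      push_cast
      have step1 : ∑ q ∈ Finset.range (m + 1),
          (a q : ℝ) * (a (m - q) : ℝ) * 2 ^ (min q (m - q)) ≤
          ∑ q ∈ Finset.range (m + 1),
          c ^ m * ((m.factorial : ℝ) ^ β * mpT β (min q (m - q))) := by
        apply Finset.sum_le_sum
        intro q hq
        have hqm : q ≤ m := by
          have := Finset.mem_range.mp hq; omega
        have h1 := ih q (by omega)
        have h2 := ih (m - q) (by omega)
        calc (a q : ℝ) * (a (m - q) : ℝ) * 2 ^ (min q (m - q))
            ≤ (c ^ q * (q.factorial : ℝ) ^ β) * (c ^ (m - q) * ((m - q).factorial : ℝ) ^ β)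
              * 2 ^ (min q (m - q)) := by
              have ha1 : (0:ℝ) ≤ (a q : ℝ) := Nat.cast_nonneg _
              have ha2 : (0:ℝ) ≤ (a (m - q) : ℝ) := Nat.cast_nonneg _
              have hb1 : (0:ℝ) ≤ c ^ q * (q.factorial : ℝ) ^ β := by positivity
              have hp2 : (0:ℝ) ≤ (2:ℝ) ^ (min q (m - q)) := by positivity
              exact mul_le_mul_of_nonneg_right
                (mul_le_mul h1 h2 ha2 hb1) hp2
          _ = c ^ m * ((q.factorial : ℝ) ^ β * ((m - q).factorial : ℝ) ^ β
                * 2 ^ (min q (m - q))) := by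
              rw [show c ^ q * (q.factorial : ℝ) ^ β * (c ^ (m - q) * ((m - q).factorial : ℝ) ^ β)
                  = (c ^ q * c ^ (m - q)) * ((q.factorial : ℝ) ^ β * ((m - q).factorial : ℝ) ^ β)
                  by ring, ← pow_add, show q + (m - q) = m by omega]
              ring
          _ ≤ c ^ m * ((m.factorial : ℝ) ^ β * mpT β (min q (m - q))) := by
              have := mp_term β hβ1 hβ2 m q hqm
              have hc0 : (0:ℝ) ≤ c ^ m := by positivity
              exact mul_le_mul_of_nonneg_left this hc0
      have step2 : ∑ q ∈ Finset.range (m + 1), mpT β (min q (m - q)) ≤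
          2 * ∑ q ∈ Finset.range (m + 1), mpT β q := by
        have hle : ∀ q ∈ Finset.range (m + 1),
            mpT β (min q (m - q)) ≤ mpT β q + mpT β (m - q) := by
          intro q _
          rcases min_choice q (m - q) with h | h
          · rw [h]; exact le_add_of_nonneg_right (mpT_nonneg β _)
          · rw [h]; exact le_add_of_nonneg_left (mpT_nonneg β _)
        calc ∑ q ∈ Finset.range (m + 1), mpT β (min q (m - q))
            ≤ ∑ q ∈ Finset.range (m + 1), (mpT β q + mpT β (m - q)) :=
              Finset.sum_le_sum hle
          _ = ∑ q ∈ Finset.range (m + 1), mpT β q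
              + ∑ q ∈ Finset.range (m + 1), mpT β (m - q) := Finset.sum_add_distrib
          _ = 2 * ∑ q ∈ Finset.range (m + 1), mpT β q := by
              have h := Finset.sum_range_reflect (fun j => mpT β j) (m + 1)
              simp only [Nat.add_sub_cancel] at h
              rw [h]; ring
      have hsumT := mp_sumT β hβ1 hβ2 m
      rw [← hxdef] at hsumT
      have hN1 : ((N:ℝ) + 1) ^ β ≤ ((m:ℝ) + 1) ^ β := by
        apply Real.rpow_le_rpow (by positivity) _ hβ0
        have : (N:ℝ) ≤ (m:ℝ) := by exact_mod_cast hmN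
        linarith
      have hc0 : (0:ℝ) ≤ c := le_trans zero_le_one hc
      calc ∑ q ∈ Finset.range (m + 1), (a q : ℝ) * (a (m - q) : ℝ) * 2 ^ (min q (m - q))
          ≤ ∑ q ∈ Finset.range (m + 1),
            c ^ m * ((m.factorial : ℝ) ^ β * mpT β (min q (m - q))) := step1
        _ = c ^ m * ((m.factorial : ℝ) ^ β
            * ∑ q ∈ Finset.range (m + 1), mpT β (min q (m - q))) := by
            rw [← Finset.mul_sum, ← Finset.mul_sum]
        _ ≤ c ^ m * ((m.factorial : ℝ) ^ β * (2 * ∑ q ∈ Finset.range (m + 1), mpT β q)) := by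
            have := mul_le_mul_of_nonneg_left step2
              (by positivity : (0:ℝ) ≤ (m.factorial : ℝ) ^ β)
            exact mul_le_mul_of_nonneg_left this (by positivity)
        _ ≤ c ^ m * ((m.factorial : ℝ) ^ β * (2 * (1 + (2:ℝ) ^ β * (x / (1 - x) ^ 2)))) := by
            have h2 : 2 * ∑ q ∈ Finset.range (m + 1), mpT β q
                ≤ 2 * (1 + (2:ℝ) ^ β * (x / (1 - x) ^ 2)) := by linarith
            have := mul_le_mul_of_nonneg_left h2
              (by positivity : (0:ℝ) ≤ (m.factorial : ℝ) ^ β)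
            exact mul_le_mul_of_nonneg_left this (by positivity)
        _ = c ^ m * ((m.factorial : ℝ) ^ β * (2 * (1 + (2:ℝ) ^ β * k))) := by rw [hkx]
        _ ≤ c ^ m * ((m.factorial : ℝ) ^ β * (c * ((N:ℝ) + 1) ^ β)) := by
            have := mul_le_mul_of_nonneg_left hN
              (by positivity : (0:ℝ) ≤ (m.factorial : ℝ) ^ β)
            exact mul_le_mul_of_nonneg_left this (by positivity)
        _ ≤ c ^ m * ((m.factorial : ℝ) ^ β * (c * ((m:ℝ) + 1) ^ β)) := by
            have h2 : c * ((N:ℝ) + 1) ^ β ≤ c * ((m:ℝ) + 1) ^ β :=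
              mul_le_mul_of_nonneg_left hN1 hc0
            have := mul_le_mul_of_nonneg_left h2
              (by positivity : (0:ℝ) ≤ (m.factorial : ℝ) ^ β)
            exact mul_le_mul_of_nonneg_left this (by positivity)
        _ = c ^ (m + 1) * ((m + 1).factorial : ℝ) ^ β := by
            rw [Nat.factorial_succ]
            push_cast
            rw [Real.mul_rpow (by positivity) (by positivity)]
            ring
end

section
/- For every β with 1/2 < β < 1 and every n, Σ_{q=0}^{⌊n/2⌋} 2^q/C(n,q)^β ≤ 1 + 2^β·k_β, where k_β = Σ_{q=1}^{∞} q/2^{q(2β−1)} = 1/(2^{2β−1}(1 − 2^{1−2β})^2). -/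
theorem binom_sum_bound (β : ℝ) (hβ1 : 1 / 2 < β) (hβ2 : β < 1)
    (k : ℝ) (hk : k = 1 / ((2 : ℝ) ^ (2 * β - 1) * (1 - (2 : ℝ) ^ (1 - 2 * β)) ^ 2))
    (n : ℕ) :
    ∑ q ∈ Finset.range (n / 2 + 1), (2 : ℝ) ^ q / (Nat.choose n q : ℝ) ^ β ≤
      1 + (2 : ℝ) ^ β * k := by
  set r : ℝ := (2 : ℝ) ^ (1 - 2 * β) with hr
  have hr0 : 0 < r := Real.rpow_pos_of_pos two_pos _
  have hr1 : r < 1 := Real.rpow_lt_one_of_one_lt_of_neg one_lt_two (by linarith)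
  have hrinv : (2 : ℝ) ^ (2 * β - 1) = r⁻¹ := by
    rw [hr, ← Real.rpow_neg (by norm_num)]; ring_nf
  have hk' : k = r / (1 - r) ^ 2 := by
    rw [hk, hrinv, one_div, mul_inv, inv_inv, div_eq_mul_inv]
  -- pointwise bound
  have key : ∀ q, 1 ≤ q → 2 * q ≤ n →
      (2 : ℝ) ^ q / (Nat.choose n q : ℝ) ^ β ≤ (2 : ℝ) ^ β * ((q : ℝ) * r ^ q) := by
    intro q hq1 h2q
    have hq1' : (1 : ℝ) ≤ (q : ℝ) := by exact_mod_cast hq1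
    have hC : (4 : ℝ) ^ q / (2 * q) ≤ (Nat.choose n q : ℝ) := by
      have h1 : 4 ^ q ≤ 2 * q * Nat.choose n q := by
        refine le_trans (Nat.four_pow_le_two_mul_self_mul_centralBinom q hq1) ?_
        exact Nat.mul_le_mul_left _ (Nat.choose_le_choose q h2q)
      have h2 : ((4 : ℕ) ^ q : ℝ) ≤ ((2 * q * Nat.choose n q : ℕ) : ℝ) := by exact_mod_cast h1
      push_cast at h2
      rw [div_le_iff₀ (by positivity)]
      linarith
    have hA : (0 : ℝ) < 4 ^ q / (2 * q) := by positivity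
    have hCb : ((4 : ℝ) ^ q / (2 * q)) ^ β ≤ (Nat.choose n q : ℝ) ^ β :=
      Real.rpow_le_rpow hA.le hC (by linarith)
    have hCbpos : (0 : ℝ) < ((4 : ℝ) ^ q / (2 * q)) ^ β := Real.rpow_pos_of_pos hA β
    have step1 : (2 : ℝ) ^ q / (Nat.choose n q : ℝ) ^ β ≤
        (2 : ℝ) ^ q / ((4 : ℝ) ^ q / (2 * q)) ^ β := by
      gcongr
    refine step1.trans ?_
    rw [Real.div_rpow (by positivity) (by positivity), div_div_eq_mul_div]
    rw [div_le_iff₀ (by positivity)]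
    have e4 : ((4 : ℝ) ^ q) ^ β = (2 : ℝ) ^ ((2 * q : ℕ) * β) := by
      rw [show (4 : ℝ) = 2 ^ 2 by norm_num, ← pow_mul, ← Real.rpow_natCast 2 (2 * q),
        ← Real.rpow_mul (by norm_num)]
    have e2 : ((2 : ℝ) * q) ^ β = (2 : ℝ) ^ β * (q : ℝ) ^ β :=
      Real.mul_rpow (by norm_num) (by positivity)
    have eq2 : (2 : ℝ) ^ q = (2 : ℝ) ^ (q : ℝ) := (Real.rpow_natCast 2 q).symm
    have erq : r ^ q = (2 : ℝ) ^ ((1 - 2 * β) * q) := by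
      rw [hr, ← Real.rpow_natCast ((2:ℝ) ^ (1 - 2*β)) q, ← Real.rpow_mul (by norm_num)]
    have hqb : (q : ℝ) ^ β ≤ (q : ℝ) := by
      nth_rewrite 2 [← Real.rpow_one (q : ℝ)]
      exact Real.rpow_le_rpow_of_exponent_le hq1' (by linarith)
    have epow : (2 : ℝ) ^ (q : ℝ) = (2 : ℝ) ^ ((1 - 2 * β) * q) * (2 : ℝ) ^ ((2 * q : ℕ) * β) := by
      rw [← Real.rpow_add (by norm_num)]
      push_cast
      ring_nf
    calc (2 : ℝ) ^ q * ((2 : ℝ) * q) ^ β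
        = (2 : ℝ) ^ β * ((q : ℝ) ^ β * (2 : ℝ) ^ ((1 - 2 * β) * q)) * ((2:ℝ) ^ ((2 * q : ℕ) * β)) := by
          rw [e2, eq2, epow]; ring
      _ ≤ (2 : ℝ) ^ β * ((q : ℝ) * r ^ q) * ((4 : ℝ) ^ q) ^ β := by
          rw [e4, erq]
          have h2b : (0:ℝ) < (2:ℝ) ^ β := Real.rpow_pos_of_pos two_pos β
          have h2qb : (0:ℝ) < (2:ℝ) ^ ((2 * q : ℕ) * β : ℝ) := Real.rpow_pos_of_pos two_pos _
          have h12 : (0:ℝ) < (2:ℝ) ^ ((1 - 2 * β) * q) := Real.rpow_pos_of_pos two_pos _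
          gcongr
  -- summability and tsum value
  have hrnorm : ‖r‖ < 1 := by rwa [Real.norm_eq_abs, abs_of_pos hr0]
  have hsum : HasSum (fun m : ℕ => (m : ℝ) * r ^ m) (r / (1 - r) ^ 2) :=
    hasSum_coe_mul_geometric_of_norm_lt_one hrnorm
  have hnn : ∀ m : ℕ, (0 : ℝ) ≤ (m : ℝ) * r ^ m := fun m => by positivity
  have htail : ∑ i ∈ Finset.range (n / 2), ((i + 1 : ℕ) : ℝ) * r ^ (i + 1) ≤ k := by
    rw [hk']
    have h0 : ((0 : ℕ) : ℝ) * r ^ 0 = 0 := by norm_num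
    calc ∑ i ∈ Finset.range (n / 2), ((i + 1 : ℕ) : ℝ) * r ^ (i + 1)
        = ∑ m ∈ Finset.range (n / 2 + 1), (m : ℝ) * r ^ m := by
          rw [Finset.sum_range_succ' (fun m => (m : ℝ) * r ^ m) (n / 2), h0, add_zero]
      _ ≤ r / (1 - r) ^ 2 :=
          Summable.sum_le_tsum _ (fun i _ => hnn i) hsum.summable |>.trans_eq hsum.tsum_eq
  have h2b1 : (1 : ℝ) ≤ (2 : ℝ) ^ β :=
    Real.one_le_rpow (by norm_num) (by linarith)
  have hk0 : 0 ≤ k := by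
    rw [hk']; positivity
  rw [Finset.sum_range_succ']
  have hfirst : (2 : ℝ) ^ 0 / (Nat.choose n 0 : ℝ) ^ β = 1 := by
    simp
  rw [hfirst]
  have hmain : ∑ i ∈ Finset.range (n / 2), (2 : ℝ) ^ (i + 1) / (Nat.choose n (i + 1) : ℝ) ^ β
      ≤ (2 : ℝ) ^ β * k := by
    calc ∑ i ∈ Finset.range (n / 2), (2 : ℝ) ^ (i + 1) / (Nat.choose n (i + 1) : ℝ) ^ β
        ≤ ∑ i ∈ Finset.range (n / 2), (2 : ℝ) ^ β * (((i + 1 : ℕ) : ℝ) * r ^ (i + 1)) := by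
          refine Finset.sum_le_sum fun i hi => ?_
          have hi' : i < n / 2 := Finset.mem_range.mp hi
          have : 2 * (i + 1) ≤ n := by omega
          exact key (i + 1) (by omega) this
      _ = (2 : ℝ) ^ β * ∑ i ∈ Finset.range (n / 2), ((i + 1 : ℕ) : ℝ) * r ^ (i + 1) := by
          rw [Finset.mul_sum]
      _ ≤ (2 : ℝ) ^ β * k := by
          have h2b : (0:ℝ) ≤ (2:ℝ) ^ β := by positivity
          exact mul_le_mul_of_nonneg_left htail h2b
  linarith
end
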